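/- Let ψ : ℂ[y₀,y₁,y₂,y₃] → ℂ[x₀,x₁,x₂,x₃] be the ℂ-algebra homomorphism determined by ψ(y₀) = x₀, ψ(y₁) = x₁² − x₀x₂, ψ(y₂) = x₁³ + (1/2)x₀²x₃ − (3/2)x₀x₁x₂, ψ(y₃) = 2x₀x₁x₂x₃ − (1/3)x₀²x₃² + x₁²x₂² − (4/3)x₁³x₃ − (4/3)x₀x₂³. Then the kernel of ψ is the principal ideal generated by 3y₀²y₃ − 4y₁³ + 4y₂². Consequently the image of ψ (the invariant ring of the ℂ⁺-action on Sym³(ℂ²)) is isomorphic to ℂ[y₀,y₁,y₂,y₃]/(3y₀²y₃ − 4y₁³ + 4y₂²), the coordinate ring of the degree-6 hypersurface 3y₀²y₃ = 4y₁³ − 4y₂² in the weighted projective space ℙ(1,2,3,4). -/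

import Mathlib

open MvPolynomial

/-- The `ℂ`-algebra homomorphism `ψ : ℂ[y₀,y₁,y₂,y₃] → ℂ[x₀,x₁,x₂,x₃]` sending
`y₀ ↦ x₀`, `y₁ ↦ x₁² − x₀x₂`, `y₂ ↦ x₁³ + (1/2)x₀²x₃ − (3/2)x₀x₁x₂`,
`y₃ ↦ 2x₀x₁x₂x₃ − (1/3)x₀²x₃² + x₁²x₂² − (4/3)x₁³x₃ − (4/3)x₀x₂³`. -/
noncomputable def psi :
    MvPolynomial (Fin 4) ℂ →ₐ[ℂ] MvPolynomial (Fin 4) ℂ :=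
  aeval ![X 0,
          X 1 ^ 2 - X 0 * X 2,
          X 1 ^ 3 + C (1 / 2 : ℂ) * X 0 ^ 2 * X 3 - C (3 / 2 : ℂ) * X 0 * X 1 * X 2,
          C (2 : ℂ) * X 0 * X 1 * X 2 * X 3 - C (1 / 3 : ℂ) * X 0 ^ 2 * X 3 ^ 2
            + X 1 ^ 2 * X 2 ^ 2 - C (4 / 3 : ℂ) * X 1 ^ 3 * X 3
            - C (4 / 3 : ℂ) * X 0 * X 2 ^ 3]

namespace PsiKerAux

/-- The polynomial ring `ℂ[y₀,y₁,y₂]` in three variables. -/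
noncomputable abbrev A := MvPolynomial (Fin 3) ℂ

/-- The relation `F = 3y₀²y₃ − 4y₁³ + 4y₂²`. -/
noncomputable def F : MvPolynomial (Fin 4) ℂ :=
  C (3 : ℂ) * X 0 ^ 2 * X 3 - C (4 : ℂ) * X 1 ^ 3 + C (4 : ℂ) * X 2 ^ 2

/-- Identify `ℂ[y₀,y₁,y₂,y₃]` with `(ℂ[y₁,y₂,y₀])[T]`, sending `y₃` to `T`. -/
noncomputable def e : MvPolynomial (Fin 4) ℂ ≃ₐ[ℂ] Polynomial A :=
  (renameEquiv ℂ (Equiv.swap (0 : Fin 4) 3)).trans (MvPolynomial.finSuccEquiv ℂ 3)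

noncomputable def a : A := C (3 : ℂ) * X 2 ^ 2
noncomputable def b : A := C (4 : ℂ) * X 0 ^ 3 - C (4 : ℂ) * X 1 ^ 2

/-- The image `G = e F`. -/
noncomputable def G : Polynomial A := Polynomial.C a * Polynomial.X - Polynomial.C b

/-- `ψ` transported through `e`. -/
noncomputable def ψ' : Polynomial A →ₐ[ℂ] MvPolynomial (Fin 4) ℂ :=
  psi.comp e.symm.toAlgHom

/-- `ψ` restricted to `ℂ[y₁,y₂,y₀]` (in the order imposed by `e`). -/
noncomputable def φ₀ : A →ₐ[ℂ] MvPolynomial (Fin 4) ℂ :=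
  aeval ![X 1 ^ 2 - X 0 * X 2,
          X 1 ^ 3 + C (1 / 2 : ℂ) * X 0 ^ 2 * X 3 - C (3 / 2 : ℂ) * X 0 * X 1 * X 2,
          X 0]

lemma he0 : e (X 0) = Polynomial.C (X 2) := by
  have h : (Equiv.swap (0 : Fin 4) 3) 0 = 3 := Equiv.swap_apply_left _ _
  have h3 : (3 : Fin 4) = Fin.succ 2 := by decide
  simp [e, h, h3, finSuccEquiv_X_succ]
  rw [h3, finSuccEquiv_X_succ]

lemma he1 : e (X 1) = Polynomial.C (X 0) := by
  have h : (Equiv.swap (0 : Fin 4) 3) 1 = 1 := by decide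
  have h1 : (1 : Fin 4) = Fin.succ 0 := by decide
  show (MvPolynomial.finSuccEquiv ℂ 3) (rename (Equiv.swap (0 : Fin 4) 3) (X 1)) = _
  rw [rename_X, h, h1, finSuccEquiv_X_succ]

lemma he2 : e (X 2) = Polynomial.C (X 1) := by
  have h : (Equiv.swap (0 : Fin 4) 3) 2 = 2 := by decide
  have h2 : (2 : Fin 4) = Fin.succ 1 := by decide
  show (MvPolynomial.finSuccEquiv ℂ 3) (rename (Equiv.swap (0 : Fin 4) 3) (X 2)) = _
  rw [rename_X, h, h2, finSuccEquiv_X_succ]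

lemma he3 : e (X 3) = Polynomial.X := by
  have h : (Equiv.swap (0 : Fin 4) 3) 3 = 0 := Equiv.swap_apply_right _ _
  simp [e, h, finSuccEquiv_X_zero]

lemma heC (c : ℂ) : e (C c) = Polynomial.C (C c) := by
  have h1 : (C c : MvPolynomial (Fin 4) ℂ) = algebraMap ℂ _ c :=
    (MvPolynomial.algebraMap_eq ℂ (Fin 4)).symm ▸ rfl
  rw [h1, AlgEquiv.commutes, Polynomial.algebraMap_apply, MvPolynomial.algebraMap_eq]

lemma heF : e F = G := by
  rw [F, G, a, b]
  simp only [map_add, map_sub, map_mul, map_pow, he0, he1, he2, he3, heC]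
  ring

/-- Evaluation of a substitution. -/
lemma eval_comp_aeval {n m : ℕ} (f : Fin n → MvPolynomial (Fin m) ℂ)
    (x : Fin m → ℂ) (p : MvPolynomial (Fin n) ℂ) :
    eval x (aeval f p) = eval (fun i => eval x (f i)) p := by
  have hb : ∀ {k : ℕ} (y : Fin k → ℂ) (q : MvPolynomial (Fin k) ℂ), aeval y q = eval y q := by
    intro k y q
    exact RingHom.congr_fun (MvPolynomial.coe_aeval_eq_eval y) q
  calc eval x (aeval f p) = aeval x (aeval f p) := (hb x _).symm
    _ = ((aeval x).comp (aeval f) : MvPolynomial (Fin n) ℂ →ₐ[ℂ] ℂ) p := rfl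
    _ = aeval (fun i => aeval x (f i)) p := by rw [comp_aeval]
    _ = eval (fun i => eval x (f i)) p := by
        simp only [hb]

lemma hpsiF : psi F = 0 := by
  apply MvPolynomial.funext
  intro x
  rw [map_zero]
  show eval x (aeval _ F) = 0
  rw [eval_comp_aeval]
  simp only [F, map_add, map_sub, map_mul, map_pow, eval_X, eval_C,
    Matrix.cons_val_zero, Matrix.cons_val_one, Matrix.head_cons,
    Matrix.cons_val_two, Matrix.tail_cons, Matrix.cons_val_three]
  ring

lemma hψ'C (c : A) : ψ' (Polynomial.C c) = φ₀ c := by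
  have h : ψ'.comp Polynomial.CAlgHom = φ₀ := by
    apply MvPolynomial.algHom_ext
    intro i
    have key : ∀ j : Fin 3, ψ' (Polynomial.C (X j)) = φ₀ (X j) := by
      intro j
      fin_cases j
      · have : Polynomial.C (X (0 : Fin 3)) = e (X 1) := he1.symm
        rw [show (⟨0, by norm_num⟩ : Fin 3) = (0 : Fin 3) from rfl, this]
        show psi (e.symm (e (X 1))) = _
        rw [AlgEquiv.symm_apply_apply]
        simp [psi, φ₀]
      · have : Polynomial.C (X (1 : Fin 3)) = e (X 2) := he2.symm
        rw [show (⟨1, by norm_num⟩ : Fin 3) = (1 : Fin 3) from rfl, this]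
        show psi (e.symm (e (X 2))) = _
        rw [AlgEquiv.symm_apply_apply]
        simp [psi, φ₀]
      · have : Polynomial.C (X (2 : Fin 3)) = e (X 0) := he0.symm
        rw [show (⟨2, by norm_num⟩ : Fin 3) = (2 : Fin 3) from rfl, this]
        show psi (e.symm (e (X 0))) = _
        rw [AlgEquiv.symm_apply_apply]
        simp [psi, φ₀]
    simpa using key i
  calc ψ' (Polynomial.C c) = (ψ'.comp Polynomial.CAlgHom) c := rfl
    _ = φ₀ c := by rw [h]

lemma hGzero : ψ' G = 0 := by
  have h : ψ' G = psi F := by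
    rw [← heF]
    show psi (e.symm (e F)) = psi F
    rw [AlgEquiv.symm_apply_apply]
  rw [h, hpsiF]

lemma phi0_inj {c : A} (h : φ₀ c = 0) : c = 0 := by
  have hev : ∀ v : Fin 3 → ℂ, v 2 ≠ 0 → eval v c = 0 := by
    intro v hv
    have hx := congrArg (eval ![v 2, 0, -(v 0) / v 2, 2 * v 1 / (v 2) ^ 2]) h
    rw [map_zero] at hx
    rw [show (φ₀ c : MvPolynomial (Fin 4) ℂ) = aeval _ c from rfl, eval_comp_aeval] at hx
    have hw : (fun i => eval ![v 2, 0, -(v 0) / v 2, 2 * v 1 / (v 2) ^ 2]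
        (![X 1 ^ 2 - X 0 * X 2,
          X 1 ^ 3 + C (1 / 2 : ℂ) * X 0 ^ 2 * X 3 - C (3 / 2 : ℂ) * X 0 * X 1 * X 2,
          X 0] i)) = v := by
      funext i
      fin_cases i
      · simp only [Fin.zero_eta, Matrix.cons_val_zero, map_sub, map_pow, map_mul, eval_X,
          Matrix.cons_val_one, Matrix.head_cons, Matrix.cons_val_two, Matrix.tail_cons]
        field_simp
        ring
      · simp only [Fin.mk_one, Matrix.cons_val_one, Matrix.head_cons, map_add, map_sub, map_mul, map_pow,
          eval_X, eval_C, Matrix.cons_val_zero, Matrix.cons_val_two, Matrix.tail_cons,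
          Matrix.cons_val_three]
        field_simp
        ring
      · simp
    rw [hw] at hx
    exact hx
  have hz : X 2 * c = 0 := by
    apply MvPolynomial.funext
    intro v
    rw [map_mul, eval_X, map_zero]
    by_cases hv : v 2 = 0
    · rw [hv, zero_mul]
    · rw [hev v hv, mul_zero]
  rcases mul_eq_zero.mp hz with h' | h'
  · exact absurd h' (MvPolynomial.X_ne_zero _)
  · exact h'

lemma hX2prime : Prime (X 2 : A) := by
  let e2 : A ≃ₐ[ℂ] Polynomial (MvPolynomial (Fin 2) ℂ) :=
    (renameEquiv ℂ (Equiv.swap (0 : Fin 3) 2)).trans (MvPolynomial.finSuccEquiv ℂ 2)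
  have h : e2 (X 2) = Polynomial.X := by
    have hs : (Equiv.swap (0 : Fin 3) 2) 2 = 0 := Equiv.swap_apply_right _ _
    simp [e2, hs, finSuccEquiv_X_zero]
  rw [← MulEquiv.prime_iff e2.toMulEquiv]
  show Prime (e2 (X 2))
  rw [h]
  exact Polynomial.prime_X

lemma hbnd : ¬ (X 2 : A) ∣ b := by
  rintro ⟨t, ht⟩
  have := congrArg (eval (fun i : Fin 3 => if i = 0 then (1 : ℂ) else 0)) ht
  simp [b] at this

lemma sat (P : Polynomial A) (h : G ∣ Polynomial.C (X 2 : A) * P) : G ∣ P := by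
  obtain ⟨Q, hQ⟩ := h
  have hdvdb : Polynomial.C (X 2 : A) ∣ Q * Polynomial.C b := by
    have hrw : Q * Polynomial.C b =
        Polynomial.C (X 2 : A) * (Polynomial.C (C (3 : ℂ) * X 2) * Polynomial.X * Q - P) := by
      have ha : Polynomial.C a = Polynomial.C (X 2 : A) * Polynomial.C (C (3 : ℂ) * X 2) := by
        rw [← map_mul]; congr 1; rw [a]; ring
      have := hQ
      rw [G, ha] at this
      -- this : C (X 2) * P = (C (X 2) * C (3 * X 2) * X - C b) * Q
      linear_combination this
    rw [hrw]
    exact Dvd.intro _ rfl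
  have hcoeff : ∀ n, (X 2 : A) ∣ Q.coeff n := by
    intro n
    have := (Polynomial.C_dvd_iff_dvd_coeff _ _).mp hdvdb n
    rw [Polynomial.coeff_mul_C] at this
    exact (hX2prime.2.2 _ _ this).resolve_right hbnd
  obtain ⟨Q', hQ'⟩ := (Polynomial.C_dvd_iff_dvd_coeff _ _).mpr hcoeff
  refine ⟨Q', ?_⟩
  have hu : (Polynomial.C (X 2 : A)) ≠ 0 := by
    simp [Polynomial.C_eq_zero, MvPolynomial.X_ne_zero]
  apply mul_left_cancel₀ hu
  rw [hQ, hQ']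
  ring

lemma key (d : ℕ) : ∀ P : Polynomial A, P.natDegree ≤ d → ψ' P = 0 → G ∣ P := by
  induction d with
  | zero =>
    intro P hd h0
    rw [Polynomial.eq_C_of_natDegree_le_zero hd] at h0 ⊢
    rw [hψ'C] at h0
    rw [phi0_inj h0, map_zero]
    exact dvd_zero _
  | succ d ih =>
    intro P hd h0
    set P₁ := P.divX with hP₁
    set c₀ := P.coeff 0 with hc₀
    have hdec : Polynomial.C a * P =
        G * P₁ + (Polynomial.C b * P₁ + Polynomial.C a * Polynomial.C c₀) := by
      conv_lhs => rw [← Polynomial.X_mul_divX_add P]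
      rw [G]
      ring
    have hQ0 : ψ' (Polynomial.C b * P₁ + Polynomial.C a * Polynomial.C c₀) = 0 := by
      have h1 := congrArg ψ' hdec
      rw [map_mul, h0, mul_zero, map_add, map_mul, hGzero, zero_mul, zero_add] at h1
      exact h1.symm
    have hdeg : (Polynomial.C b * P₁ + Polynomial.C a * Polynomial.C c₀).natDegree ≤ d := by
      refine le_trans (Polynomial.natDegree_add_le _ _) ?_
      have h1 : (Polynomial.C b * P₁).natDegree ≤ d := by
        refine le_trans (Polynomial.natDegree_C_mul_le _ _) ?_
        rw [hP₁, Polynomial.natDegree_divX_eq_natDegree_tsub_one]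
        omega
      have h2 : (Polynomial.C a * Polynomial.C c₀).natDegree = 0 := by
        rw [← map_mul, Polynomial.natDegree_C]
      omega
    have hQdvd := ih _ hdeg hQ0
    have hCaP : G ∣ Polynomial.C a * P := by
      rw [hdec]
      exact dvd_add (Dvd.intro _ rfl) hQdvd
    have h3 : IsUnit (Polynomial.C (C (3 : ℂ) : A)) := by
      refine IsUnit.of_mul_eq_one (Polynomial.C (C (3⁻¹ : ℂ))) ?_
      rw [← map_mul, ← map_mul]
      norm_num
    have hform : Polynomial.C (X 2 : A) * (Polynomial.C (X 2 : A) * P) *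
        Polynomial.C (C (3 : ℂ) : A) = Polynomial.C a * P := by
      rw [a, map_mul, map_pow]
      ring
    apply sat
    apply sat
    rw [← IsUnit.dvd_mul_right h3, hform]
    exact hCaP

end PsiKerAux

open PsiKerAux in
/-- The kernel of `ψ` is the principal ideal generated by `3y₀²y₃ − 4y₁³ + 4y₂²`;
consequently the invariant ring of the `ℂ⁺`-action on `Sym³(ℂ²)` (the image of `ψ`)
is isomorphic to `ℂ[y₀,y₁,y₂,y₃]/(3y₀²y₃ − 4y₁³ + 4y₂²)`, the coordinate ring of the
degree-6 hypersurface `3y₀²y₃ = 4y₁³ − 4y₂²` in `ℙ(1,2,3,4)`. -/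
theorem psi_ker_eq_span :
    RingHom.ker psi =
      Ideal.span ({(C (3 : ℂ)) * X 0 ^ 2 * X 3 - C (4 : ℂ) * X 1 ^ 3 + C (4 : ℂ) * X 2 ^ 2} :
        Set (MvPolynomial (Fin 4) ℂ)) ∧
    Nonempty
      ((MvPolynomial (Fin 4) ℂ ⧸
          Ideal.span ({(C (3 : ℂ)) * X 0 ^ 2 * X 3 - C (4 : ℂ) * X 1 ^ 3 + C (4 : ℂ) * X 2 ^ 2} :
            Set (MvPolynomial (Fin 4) ℂ))) ≃ₐ[ℂ] psi.range) := by
  have h1 : RingHom.ker psi = Ideal.span ({F} : Set (MvPolynomial (Fin 4) ℂ)) := by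
    apply le_antisymm
    · intro p hp
      rw [RingHom.mem_ker] at hp
      rw [Ideal.mem_span_singleton]
      have h0 : ψ' (e p) = 0 := by
        show psi (e.symm (e p)) = 0
        rw [AlgEquiv.symm_apply_apply, hp]
      have hd := key (e p).natDegree (e p) le_rfl h0
      rw [← heF] at hd
      obtain ⟨t, ht⟩ := hd
      refine ⟨e.symm t, ?_⟩
      apply e.injective
      rw [map_mul, AlgEquiv.apply_symm_apply, ht]
    · rw [Ideal.span_le]
      rintro q hq
      rw [Set.mem_singleton_iff] at hq
      subst hq
      exact RingHom.mem_ker.mpr hpsiF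
  have h1' : RingHom.ker psi =
      Ideal.span ({(C (3 : ℂ)) * X 0 ^ 2 * X 3 - C (4 : ℂ) * X 1 ^ 3 + C (4 : ℂ) * X 2 ^ 2} :
        Set (MvPolynomial (Fin 4) ℂ)) := h1
  refine ⟨h1', ?_⟩
  exact ⟨(Ideal.quotientEquivAlgOfEq ℂ h1'.symm).trans (Ideal.quotientKerEquivRange psi)⟩
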